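/- arXiv:1704.08037 — 9 statements merged into one kernel-verified Lean document; each statement's English description precedes it below -/
import Mathlib

section
/- Let A be a nonscalar n×n matrix over a field F with n ≥ 3, and let γ ∈ F. Then there exists an invertible matrix P such that P·A·P⁻¹ has (1,1) entry equal to γ and its lower-right (n−1)×(n−1) principal submatrix is nonscalar. -/
open Matrix

section helpers
variable {F : Type*} [Field F] {m : Type*} [Fintype m] [DecidableEq m]

private lemma stdE_sq (i j : m) (h : i ≠ j) (c : F) :
    single i j c * single i j c = 0 :=
  single_mul_single_of_ne c i j i h.symm c

def tunit (i j : m) (h : i ≠ j) (c : F) : (Matrix m m F)ˣ where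
  val := 1 + single i j c
  inv := 1 - single i j c
  val_inv := by
    rw [mul_sub, mul_one, add_mul, one_mul, stdE_sq i j h c, add_zero, add_sub_cancel_right]
  inv_val := by
    rw [mul_add, mul_one, sub_mul, one_mul, stdE_sq i j h c, sub_zero, sub_add_cancel]

lemma tunit_conj_apply (i j : m) (h : i ≠ j) (c : F) (A : Matrix m m F) (k l : m) :
    ((tunit i j h c).val * A * ((tunit i j h c)⁻¹).val) k l
      = A k l + (if k = i then c * A j l else 0) - (if l = j then A k i * c else 0)
        - (if k = i then (if l = j then c * (A j i * c) else 0) else 0) := by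
  have hval : (tunit i j h c).val = 1 + single i j c := rfl
  have hinv : ((tunit i j h c)⁻¹).val = 1 - single i j c := rfl
  have expand : (1 + single i j c) * A * (1 - single i j c)
      = A + single i j c * A - A * single i j c
        - single i j c * (A * single i j c) := by
    noncomm_ring
  rw [hval, hinv, expand]
  by_cases hk : k = i <;> by_cases hl : l = j <;>
    simp [hk, hl, Matrix.sub_apply, Matrix.add_apply]

def SimMat (A B : Matrix m m F) : Prop := ∃ P : (Matrix m m F)ˣ, B = P.val * A * P⁻¹.val

lemma simMat_refl (A : Matrix m m F) : SimMat A A := ⟨1, by simp⟩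

lemma simMat_trans {A B C : Matrix m m F} (h1 : SimMat A B) (h2 : SimMat B C) : SimMat A C := by
  obtain ⟨P, rfl⟩ := h1
  obtain ⟨Q, rfl⟩ := h2
  exact ⟨Q * P, by rw [_root_.mul_inv_rev]; simp [Units.val_mul, mul_assoc]⟩

lemma simMat_tunit (A : Matrix m m F) (i j : m) (h : i ≠ j) (c : F) :
    SimMat A ((tunit i j h c).val * A * ((tunit i j h c)⁻¹).val) := ⟨_, rfl⟩

lemma simMat_perm (A : Matrix m m F) (σ : Equiv.Perm m) : SimMat A (A.submatrix σ σ) := by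
  refine ⟨⟨(1 : Matrix m m F).submatrix σ id, (1 : Matrix m m F).submatrix id σ, ?_, ?_⟩, ?_⟩
  · ext k l
    simp [Matrix.mul_apply, Matrix.one_apply, Finset.sum_ite_eq, Matrix.submatrix_apply]
  · ext k l
    simp [Matrix.mul_apply, Matrix.one_apply, Finset.sum_ite_eq, Matrix.submatrix_apply,
      Equiv.apply_eq_iff_eq_symm_apply, Finset.sum_ite_eq', Equiv.apply_symm_apply]
  · ext k l
    simp [Matrix.mul_apply, Matrix.one_apply, Finset.sum_ite_eq, Matrix.submatrix_apply]

end helpers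

theorem stmt_1 {F : Type*} [Field F] {n : ℕ}
    (A : Matrix (Fin (n + 3)) (Fin (n + 3)) F)
    (hA : ∀ c : F, A ≠ c • (1 : Matrix (Fin (n + 3)) (Fin (n + 3)) F)) (γ : F) :
    ∃ P : (Matrix (Fin (n + 3)) (Fin (n + 3)) F)ˣ,
      (P.val * A * P⁻¹.val) 0 0 = γ ∧
      ∀ c : F, (P.val * A * P⁻¹.val).submatrix Fin.succ Fin.succ ≠
        c • (1 : Matrix (Fin (n + 2)) (Fin (n + 2)) F) := by
  have h01 : (0 : Fin (n+3)) ≠ 1 := by simp [Fin.ext_iff]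
  have h02 : (0 : Fin (n+3)) ≠ 2 := by simp [Fin.ext_iff, Nat.mod_eq_of_lt (by omega : 2 < n + 3)]
  have h12 : (1 : Fin (n+3)) ≠ 2 := by simp [Fin.ext_iff, Nat.mod_eq_of_lt (by omega : 2 < n + 3)]
  have h01' : (0 : Fin (n+2)) ≠ 1 := by simp [Fin.ext_iff]
  have h10 := h01.symm
  have h21 := h12.symm
  have h20 := h02.symm
  -- Step 1: find B similar to A with a nonzero off-diagonal entry
  have step1 : ∃ B, SimMat A B ∧ ∃ i j : Fin (n+3), i ≠ j ∧ B i j ≠ 0 := by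
    by_cases hoff : ∃ i j : Fin (n+3), i ≠ j ∧ A i j ≠ 0
    · exact ⟨A, simMat_refl A, hoff⟩
    · push_neg at hoff
      by_cases hdiag : ∀ i, A i i = A 0 0
      · exfalso
        apply hA (A 0 0)
        ext a b
        by_cases hab : a = b
        · subst hab; simp [Matrix.smul_apply, Matrix.one_apply, hdiag a]
        · simp [hoff a b hab, Matrix.smul_apply, Matrix.one_apply, hab]
      · push_neg at hdiag
        obtain ⟨i, hi⟩ := hdiag
        have hi0 : i ≠ 0 := by rintro rfl; exact hi rfl
        refine ⟨_, simMat_tunit A i 0 hi0 1, i, 0, hi0, ?_⟩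
        rw [tunit_conj_apply]
        simp [hi0, hoff i 0 hi0, hoff 0 i (Ne.symm hi0)]
        exact sub_ne_zero_of_ne (Ne.symm hi)
  obtain ⟨B, hAB, i, j, hij, hBij⟩ := step1
  -- Step 2: permute the nonzero off-diagonal entry to position (1,0)
  set τ := Equiv.swap (0 : Fin (n+3)) j with hτdef
  have hτj : τ j = 0 := Equiv.swap_apply_right 0 j
  have hτ0 : τ 0 = j := Equiv.swap_apply_left 0 j
  have hi' : τ i ≠ 0 := by
    rw [← hτj]; exact fun hh => hij (τ.injective hh)
  set ρ := Equiv.swap (1 : Fin (n+3)) (τ i) with hρdef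
  have hρ0 : ρ 0 = 0 := Equiv.swap_apply_of_ne_of_ne h01 hi'.symm
  have hρ1 : ρ 1 = τ i := Equiv.swap_apply_left 1 (τ i)
  set σ := ρ.trans τ with hσdef
  have hσ0 : σ 0 = j := by simp [hσdef, Equiv.trans_apply, hρ0, hτ0]
  have hσ1 : σ 1 = i := by
    simp only [hσdef, Equiv.trans_apply, hρ1, hτdef, Equiv.swap_apply_self]
  set C := B.submatrix σ σ with hCdef
  have hAC : SimMat A C := simMat_trans hAB (simMat_perm B σ)
  have hC10 : C 1 0 ≠ 0 := by
    simpa [hCdef, Matrix.submatrix_apply, hσ0, hσ1] using hBij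
  -- Step 3: fix the (0,0) entry to γ
  set t := (γ - C 0 0) / C 1 0 with htdef
  set D := (tunit (0:Fin (n+3)) 1 h01 t).val * C * ((tunit (0:Fin (n+3)) 1 h01 t)⁻¹).val with hDdef
  have hAD : SimMat A D := simMat_trans hAC (simMat_tunit C 0 1 h01 t)
  have hD00 : D 0 0 = γ := by
    rw [hDdef, tunit_conj_apply]
    simp only [if_pos rfl, if_neg h01]
    rw [htdef, div_mul_cancel₀ _ hC10]
    simp [h01]
  have hD10 : D 1 0 ≠ 0 := by
    rw [hDdef, tunit_conj_apply]
    simpa [h10, h01] using hC10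
  -- Step 4
  by_cases hns : ∀ c : F, D.submatrix Fin.succ Fin.succ ≠ c • 1
  · obtain ⟨P, hP⟩ := hAD
    exact ⟨P, by rw [← hP]; exact hD00, by rw [← hP]; exact hns⟩
  · push_neg at hns
    obtain ⟨c, hc⟩ := hns
    have hD12 : D 1 2 = 0 := by
      have h := congrFun (congrFun hc 0) 1
      rw [Matrix.submatrix_apply, Fin.succ_zero_eq_one, Fin.succ_one_eq_two] at h
      simpa [Matrix.smul_apply, Matrix.one_apply, h01'] using h
    -- Step 4a: clear the (2,0) entry
    set s := -(D 2 0) / D 1 0 with hsdef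
    set D4 := (tunit (2:Fin (n+3)) 1 h21 s).val * D * ((tunit (2:Fin (n+3)) 1 h21 s)⁻¹).val with hD4def
    have hAD4 : SimMat A D4 := simMat_trans hAD (simMat_tunit D 2 1 h21 s)
    have hD400 : D4 0 0 = γ := by
      rw [hD4def, tunit_conj_apply]
      simpa [h02, h01] using hD00
    have hD410 : D4 1 0 ≠ 0 := by
      rw [hD4def, tunit_conj_apply]
      simpa [h12, h10] using hD10
    have hD420 : D4 2 0 = 0 := by
      rw [hD4def, tunit_conj_apply]
      simp only [if_pos rfl, if_neg h01]
      rw [hsdef, div_mul_cancel₀ _ hD10]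
      simp [h01]
    have hD412 : D4 1 2 = 0 := by
      rw [hD4def, tunit_conj_apply]
      simpa [h12, h21] using hD12
    -- Step 4b: create a nonzero off-diagonal entry in the lower-right block
    set M := (tunit (0:Fin (n+3)) 2 h02 1).val * D4 * ((tunit (0:Fin (n+3)) 2 h02 1)⁻¹).val with hMdef
    have hAM : SimMat A M := simMat_trans hAD4 (simMat_tunit D4 0 2 h02 1)
    have hM00 : M 0 0 = γ := by
      rw [hMdef, tunit_conj_apply]
      simp [h02, hD400, hD420]
    have hM12 : M 1 2 ≠ 0 := by
      rw [hMdef, tunit_conj_apply]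
      simpa [h10, hD412] using hD410
    obtain ⟨P, hP⟩ := hAM
    refine ⟨P, by rw [← hP]; exact hM00, ?_⟩
    intro c' hc'
    rw [← hP] at hc'
    apply hM12
    have h := congrFun (congrFun hc' 0) 1
    rw [Matrix.submatrix_apply, Fin.succ_zero_eq_one, Fin.succ_one_eq_two] at h
    simpa [Matrix.smul_apply, Matrix.one_apply, h01'] using h
end

section
/- Let A be a nonscalar 2×2 matrix over a field F and let γ ∈ F. Then A is similar to a matrix with diagonal (γ, tr(A) − γ). -/
open Matrix

theorem stmt_2 {F : Type*} [Field F]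
    (A : Matrix (Fin 2) (Fin 2) F)
    (hA : ∀ c : F, A ≠ c • (1 : Matrix (Fin 2) (Fin 2) F)) (γ : F) :
    ∃ P : (Matrix (Fin 2) (Fin 2) F)ˣ,
      (P.val * A * P⁻¹.val) 0 0 = γ ∧ (P.val * A * P⁻¹.val) 1 1 = A.trace - γ := by
  obtain ⟨v0, v1, hd⟩ : ∃ v0 v1 : F,
      v0 * (A 1 0 * v0 + A 1 1 * v1) - v1 * (A 0 0 * v0 + A 0 1 * v1) ≠ 0 := by
    by_cases hb : A 0 1 ≠ 0
    · exact ⟨0, 1, by simpa using hb⟩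
    · by_cases hc : A 1 0 ≠ 0
      · exact ⟨1, 0, by simpa using hc⟩
      · push_neg at hb hc
        refine ⟨1, 1, ?_⟩
        have hae : A 0 0 ≠ A 1 1 := by
          intro h
          apply hA (A 0 0)
          ext i j
          fin_cases i <;> fin_cases j <;>
            simp [hb, hc, Matrix.one_apply, h]
        simp only [hb, hc, mul_one, one_mul, zero_add, add_zero, zero_mul, mul_zero]
        intro h
        apply hae
        linear_combination -h
  set p : F := A 0 0 * v0 + A 0 1 * v1 with hp
  set q : F := A 1 0 * v0 + A 1 1 * v1 with hq
  set w0 : F := p - γ * v0 with hw0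
  set w1 : F := q - γ * v1 with hw1
  set d : F := v0 * q - v1 * p with hdd
  set Q : Matrix (Fin 2) (Fin 2) F := !![v0, w0; v1, w1] with hQ
  have hdet : Q.det = d := by
    simp [hQ, Matrix.det_fin_two, hw0, hw1, hdd]; ring
  have hdu : IsUnit Q.det := by rw [hdet]; exact isUnit_iff_ne_zero.mpr hd
  haveI : Invertible Q := Q.invertibleOfIsUnitDet hdu
  have hinv : ⅟Q = d⁻¹ • !![w1, -w0; -v1, v0] := by
    apply invOf_eq_right_inv
    ext i j
    fin_cases i <;> fin_cases j <;>
      · simp [hQ, Matrix.mul_apply, Fin.sum_univ_two, Matrix.one_apply]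
        field_simp
        ring
  refine ⟨(unitOfInvertible Q)⁻¹, ?_, ?_⟩ <;>
  · rw [show ((unitOfInvertible Q)⁻¹).val = ⅟Q from rfl,
        show ((unitOfInvertible Q)⁻¹)⁻¹.val = Q by rw [inv_inv]; rfl, hinv]
    simp only [Matrix.mul_apply, Fin.sum_univ_two, Matrix.smul_apply, Matrix.cons_val',
      Matrix.cons_val_zero, Matrix.cons_val_one, Matrix.head_cons, Matrix.head_fin_const,
      Matrix.empty_val', Matrix.cons_val_fin_one, Matrix.trace_fin_two, smul_eq_mul, hQ, Matrix.of_apply]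
    field_simp
    ring
end

section
/- Let A = (a_ij) be an n×n matrix over a field F with a nonzero off-diagonal entry a_rs (r ≠ s). Let B be the matrix equal to the identity except on row s, where b_sr = 0, b_ss = a_rs, and b_sk = a_rk − 1 for k ∉ {r,s}. Then B is invertible and every off-diagonal entry of row r of B·A·B⁻¹ equals 1. -/
theorem stmt_5 {F : Type*} [Field F] {n : ℕ}
    (A : Matrix (Fin n) (Fin n) F)
    (r s : Fin n) (hrs : r ≠ s) (hArs : A r s ≠ 0)
    (B : Matrix (Fin n) (Fin n) F)
    (hB : B = Matrix.of fun i j =>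
      if i = s then (if j = r then 0 else if j = s then A r s else A r j - 1)
      else (1 : Matrix (Fin n) (Fin n) F) i j) :
    IsUnit B ∧ ∀ k, k ≠ r → (B * A * B⁻¹) r k = 1 := by
  have hsr : s ≠ r := hrs.symm
  set a := A r s with ha
  set C : Matrix (Fin n) (Fin n) F := Matrix.of (fun i j =>
    if i = s then (if j = r then 0 else if j = s then a⁻¹ else -(A r j - 1) * a⁻¹)
    else (1 : Matrix (Fin n) (Fin n) F) i j) with hC
  have hBo : ∀ i j, i ≠ s → B i j = if i = j then 1 else 0 := by
    intro i j hi; rw [hB]; simp [hi, Matrix.one_apply]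
  have hBs : ∀ j, B s j = if j = r then 0 else if j = s then a else A r j - 1 := by
    intro j; rw [hB]; simp
  have hCo : ∀ i j, i ≠ s → C i j = if i = j then 1 else 0 := by
    intro i j hi; rw [hC]; simp [hi, Matrix.one_apply]
  have hCs : ∀ j, C s j = if j = r then 0 else if j = s then a⁻¹ else -(A r j - 1) * a⁻¹ := by
    intro j; rw [hC]; simp
  have hBC : B * C = 1 := by
    ext i j
    rw [Matrix.mul_apply]
    by_cases hi : i = s
    · rw [hi]
      by_cases hj : j = s
      · rw [hj, Finset.sum_eq_single s
          (fun k _ hk => by rw [hCo k s hk, if_neg hk, mul_zero]) (by simp)]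
        rw [hBs, hCs, if_neg hsr, if_pos rfl, if_neg hsr, if_pos rfl, Matrix.one_apply_eq]
        field_simp
      · by_cases hjr : j = r
        · rw [hjr, Finset.sum_eq_zero, Matrix.one_apply_ne hsr]
          intro k _
          by_cases hks : k = s
          · rw [hks, hCs, if_pos rfl, mul_zero]
          · rw [hCo k r hks]
            by_cases hkr : k = r
            · rw [hkr, hBs, if_pos rfl, zero_mul]
            · rw [if_neg hkr, mul_zero]
        · rw [Finset.sum_eq_add_of_mem j s (Finset.mem_univ _) (Finset.mem_univ _) hj
            (by rintro k _ ⟨hkj, hks⟩; rw [hCo k j hks, if_neg hkj, mul_zero])]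
          rw [hBs, if_neg hjr, if_neg hj, hCo j j hj, if_pos rfl, hBs, if_neg hsr,
            if_pos rfl, hCs, if_neg hjr, if_neg hj,
            Matrix.one_apply_ne (fun h => hj h.symm)]
          field_simp
          ring
    · rw [Finset.sum_eq_single i
        (fun k _ hk => by rw [hBo i k hi, if_neg (fun h => hk h.symm), zero_mul]) (by simp)]
      rw [hBo i i hi, if_pos rfl, one_mul, hCo i j hi, Matrix.one_apply]
  have hinv : B⁻¹ = C := Matrix.inv_eq_right_inv hBC
  refine ⟨(Matrix.isUnit_iff_isUnit_det B).mpr (Matrix.isUnit_det_of_right_inverse hBC), ?_⟩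
  intro k hk
  rw [hinv, Matrix.mul_assoc, Matrix.mul_apply]
  rw [Finset.sum_eq_single r
    (fun m _ hm => by rw [hBo r m hrs, if_neg (fun h => hm h.symm), zero_mul]) (by simp)]
  rw [hBo r r hrs, if_pos rfl, one_mul, Matrix.mul_apply]
  by_cases hks : k = s
  · rw [hks, Finset.sum_eq_single s
      (fun m _ hm => by rw [hCo m s hm, if_neg hm, mul_zero]) (by simp)]
    rw [hCs, if_neg hsr, if_pos rfl, ← ha]
    field_simp
  · rw [Finset.sum_eq_add_of_mem k s (Finset.mem_univ _) (Finset.mem_univ _) hks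
      (by rintro m _ ⟨hmk, hms⟩; rw [hCo m k hms, if_neg hmk, mul_zero])]
    rw [hCo k k hks, if_pos rfl, hCs, if_neg hk, if_neg hks, ← ha]
    field_simp
    ring
end

section
/- Let A = (a_ij) be an n×n matrix over a field F such that for some index r all off-diagonal entries of row r equal 1. Let γ₁, ..., γₙ ∈ F satisfy γ₁ + ⋯ + γₙ = tr(A). Let B be the matrix equal to the identity except on column r, where b_kr = γ_k − a_kk for k ≠ r (and b_rr = 1). Then B is invertible and the diagonal of B·A·B⁻¹ is (γ₁, ..., γₙ). -/
theorem stmt_6 {F : Type*} [Field F] {n : ℕ}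
    (A : Matrix (Fin n) (Fin n) F) (r : Fin n)
    (hrow : ∀ k, k ≠ r → A r k = 1)
    (γ : Fin n → F) (hγ : ∑ i, γ i = A.trace)
    (B : Matrix (Fin n) (Fin n) F)
    (hB : B = Matrix.of fun i j =>
      if j = r then (if i = r then 1 else γ i - A i i)
      else (1 : Matrix (Fin n) (Fin n) F) i j) :
    IsUnit B ∧ ∀ i, (B * A * B⁻¹) i i = γ i := by
  set C : Matrix (Fin n) (Fin n) F := Matrix.of
    (fun i j => if j = r then (if i = r then 0 else γ i - A i i) else 0) with hC
  have hBC : B = 1 + C := by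
    rw [hB]
    ext i j
    by_cases hj : j = r
    · by_cases hi : i = r <;> simp [hC, Matrix.one_apply, hi, hj]
    · simp [hC, hj]
  have hCsq : C * C = 0 := by
    ext i j
    simp only [Matrix.mul_apply, Matrix.zero_apply]
    apply Finset.sum_eq_zero
    intro k _
    by_cases hk : k = r
    · simp [hC, hk]
    · simp [hC, hk]
  have hinv : B * (1 - C) = 1 := by
    rw [hBC]
    have : (1 + C) * (1 - C) = 1 - C * C := by noncomm_ring
    rw [this, hCsq, sub_zero]
  have hinv2 : (1 - C) * B = 1 := by
    rw [hBC]
    have : (1 - C) * (1 + C) = 1 - C * C := by noncomm_ring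
    rw [this, hCsq, sub_zero]
  have hBinv : B⁻¹ = 1 - C := Matrix.inv_eq_right_inv hinv
  refine ⟨⟨⟨B, 1 - C, hinv, hinv2⟩, rfl⟩, ?_⟩
  have hCA : ∀ i j, (C * A) i j = (if i = r then 0 else γ i - A i i) * A r j := by
    intro i j
    rw [Matrix.mul_apply, Finset.sum_eq_single r]
    · simp [hC]
    · intro k _ hk; simp [hC, hk]
    · simp
  have hACd : ∀ i, i ≠ r → (A * C) i i = 0 := by
    intro i hi
    rw [Matrix.mul_apply]
    apply Finset.sum_eq_zero
    intro k _
    simp [hC, hi]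
  have hACr : (A * C) r r = A r r - γ r := by
    rw [Matrix.mul_apply]
    have h1 : ∀ k : Fin n, A r k * C k r = (γ k - A k k) - (if k = r then γ k - A k k else 0) := by
      intro k
      by_cases hk : k = r
      · simp [hC, hk]
      · rw [hrow k hk]; simp [hC, hk]
    rw [Finset.sum_congr rfl (fun k _ => h1 k), Finset.sum_sub_distrib,
      Finset.sum_ite_eq' Finset.univ r, Finset.sum_sub_distrib]
    have htr : ∑ k, A k k = A.trace := rfl
    simp [htr, hγ]
  have hCAC : ∀ i, (C * A * C) i i = 0 := by
    intro i
    by_cases hi : i = r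
    · subst hi
      rw [Matrix.mul_apply]
      apply Finset.sum_eq_zero
      intro k _
      rw [hCA]
      simp
    · rw [Matrix.mul_apply]
      apply Finset.sum_eq_zero
      intro k _
      simp [hC, hi]
  intro i
  have hexp : B * A * B⁻¹ = A - A * C + C * A - C * A * C := by
    rw [hBinv, hBC]; noncomm_ring
  rw [hexp]
  simp only [Matrix.add_apply, Matrix.sub_apply]
  by_cases hi : i = r
  · subst hi
    rw [hACr, hCA, hCAC]
    simp
  · rw [hACd i hi, hCA, hCAC, hrow i hi]
    simp [hi]
end

section
/- Let A be a non-diagonal n×n matrix over a field F and let γ₁, ..., γₙ ∈ F with γ₁ + ⋯ + γₙ = tr(A). Then there exist invertible matrices B₁ and B₂ such that B₂·B₁·A·B₁⁻¹·B₂⁻¹ has diagonal (γ₁, ..., γₙ). -/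
open Matrix

section
variable {F : Type*} [Field F] {n : ℕ}

private lemma vmv_sq (u v : Fin n → F) (h : v ⬝ᵥ u = 0) :
    vecMulVec u v * vecMulVec u v = 0 := by
  ext p q
  rw [Matrix.mul_apply]
  simp only [vecMulVec_apply, Matrix.zero_apply]
  calc ∑ r, (u p * v r) * (u r * v q) = (∑ r, v r * u r) * (u p * v q) := by
        rw [Finset.sum_mul]; exact Finset.sum_congr rfl fun r _ => by ring
    _ = 0 := by rw [show (∑ r, v r * u r) = v ⬝ᵥ u from rfl, h, zero_mul]

private lemma unit_mul (u v : Fin n → F) (h : v ⬝ᵥ u = 0) :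
    (1 + vecMulVec u v) * (1 - vecMulVec u v) = 1 := by
  have h2 := vmv_sq u v h
  rw [mul_sub, add_mul, add_mul, mul_one, mul_one, one_mul, h2]
  abel

private lemma unit_mul' (u v : Fin n → F) (h : v ⬝ᵥ u = 0) :
    (1 - vecMulVec u v) * (1 + vecMulVec u v) = 1 := by
  have h2 := vmv_sq u v h
  rw [mul_add, sub_mul, sub_mul, mul_one, mul_one, one_mul, h2]
  abel

/-- Unit of the form `1 + u vᵀ` when `vᵀ u = 0`. -/
private def mkUnit (u v : Fin n → F) (h : v ⬝ᵥ u = 0) : (Matrix (Fin n) (Fin n) F)ˣ :=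
  ⟨1 + vecMulVec u v, 1 - vecMulVec u v, unit_mul u v h, unit_mul' u v h⟩

end

theorem stmt_7 {F : Type*} [Field F] {n : ℕ}
    (A : Matrix (Fin n) (Fin n) F)
    (hA : ∃ i j, i ≠ j ∧ A i j ≠ 0)
    (γ : Fin n → F) (hγ : ∑ i, γ i = A.trace) :
    ∃ B₁ B₂ : (Matrix (Fin n) (Fin n) F)ˣ,
      ∀ i, (B₂.val * B₁.val * A * B₁⁻¹.val * B₂⁻¹.val) i i = γ i := by
  obtain ⟨i, j, hij, hAij⟩ := hA
  -- diagonal scaling making the (i,j) entry 1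
  set d : Fin n → F := fun q => if q = j then (A i j)⁻¹ else 1 with hd
  have hdne : ∀ q, d q ≠ 0 := by
    intro q; by_cases h : q = j <;> simp [hd, h, inv_ne_zero hAij]
  have hdi : d i = 1 := by simp [hd, hij]
  have hdj : A i j * d j = 1 := by
    simp [hd, mul_inv_cancel₀ hAij]
  set uD : (Matrix (Fin n) (Fin n) F)ˣ :=
    ⟨diagonal d, diagonal (fun q => (d q)⁻¹),
      by rw [diagonal_mul_diagonal]
         convert diagonal_one using 2
         exact funext fun q => mul_inv_cancel₀ (hdne q),
      by rw [diagonal_mul_diagonal]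
         convert diagonal_one using 2
         exact funext fun q => inv_mul_cancel₀ (hdne q)⟩ with huD
  -- row elementary operation making row i all ones off the diagonal
  set c : Fin n → F := fun q => if q = i then 0 else 1 - A i q * d q with hc
  have hcj : c ⬝ᵥ Pi.single j 1 = 0 := by
    have hcj0 : c j = 0 := by
      simp only [hc]
      rw [if_neg (Ne.symm hij), hdj, sub_self]
    simp [dotProduct, Pi.single_apply, hcj0]
  set uE : (Matrix (Fin n) (Fin n) F)ˣ := mkUnit (Pi.single j 1) c hcj with huE
  set B₁ : (Matrix (Fin n) (Fin n) F)ˣ := uE⁻¹ * uD⁻¹ with hB₁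
  set M : Matrix (Fin n) (Fin n) F := B₁.val * A * B₁⁻¹.val with hM
  have htr : M.trace = A.trace := trace_units_conj B₁ A
  -- row i of M is all ones off the diagonal
  have hrow : ∀ q, q ≠ i → M i q = 1 := by
    intro q hq
    have hB₁v : B₁.val = uE.inv * uD.inv := rfl
    have hB₁iv : B₁⁻¹.val = uD.val * uE.val := rfl
    have e1 : ∀ X : Matrix (Fin n) (Fin n) F, (uE.inv * X) i = X i := by
      intro X; funext r
      rw [Matrix.mul_apply]
      have hent : ∀ s, uE.inv i s = if i = s then 1 else 0 := by
        intro s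
        show ((1 : Matrix (Fin n) (Fin n) F) - vecMulVec (Pi.single j 1) c) i s
            = if i = s then 1 else 0
        simp [Matrix.sub_apply, Matrix.one_apply, vecMulVec_apply,
          Pi.single_apply, Ne.symm hij]
      simp only [hent, ite_mul, one_mul, zero_mul]
      rw [Finset.sum_ite_eq]
      simp
    have e2 : ∀ X : Matrix (Fin n) (Fin n) F, ∀ q, (X * uE.val) i q = X i q + X i j * c q := by
      intro X q
      rw [Matrix.mul_apply]
      have hent : ∀ s, uE.val s q
          = (if s = q then 1 else 0) + (if s = j then c q else 0) := by
        intro s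
        show ((1 : Matrix (Fin n) (Fin n) F) + vecMulVec (Pi.single j 1) c) s q = _
        simp [Matrix.add_apply, Matrix.one_apply, vecMulVec_apply, Pi.single_apply]
      simp only [hent, mul_add, mul_ite, mul_one, mul_zero]
      rw [Finset.sum_add_distrib, Finset.sum_ite_eq', Finset.sum_ite_eq']
      simp
    have hMrw : M = uE.inv * (uD.inv * A * uD.val * uE.val) := by
      rw [hM, hB₁v, hB₁iv]; noncomm_ring
    rw [hMrw, e1, e2]
    have hdia : ∀ p q, (uD.inv * A * uD.val) p q = (d p)⁻¹ * A p q * d q := by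
      intro p q
      show ((diagonal (fun r => (d r)⁻¹) * A) * diagonal d) p q = _
      rw [mul_diagonal, diagonal_mul]
    rw [hdia, hdia, hdi, inv_one, one_mul, one_mul, hdj]
    simp only [hc, if_neg hq, one_mul]
    ring
  -- second conjugation fixing the diagonal
  set t : Fin n → F := fun p => if p = i then 0 else γ p - M p p with ht
  have hti : (Pi.single i 1 : Fin n → F) ⬝ᵥ t = 0 := by
    have hti0 : t i = 0 := by simp [ht]
    simp [dotProduct, Pi.single_apply, ite_mul, hti0]
  set B₂ : (Matrix (Fin n) (Fin n) F)ˣ := mkUnit t (Pi.single i 1) hti with hB₂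
  refine ⟨B₁, B₂, ?_⟩
  intro p
  have key : B₂.val * B₁.val * A * B₁⁻¹.val * B₂⁻¹.val = B₂.val * M * B₂.inv := by
    rw [hM]
    have : B₂⁻¹.val = B₂.inv := rfl
    rw [this]; noncomm_ring
  rw [key]
  have hBM : ∀ p s, (B₂.val * M) p s = M p s + t p * M i s := by
    intro p s
    rw [Matrix.mul_apply]
    have hent : ∀ r, B₂.val p r
        = (if p = r then 1 else 0) + t p * (if r = i then 1 else 0) := by
      intro r
      show ((1 : Matrix (Fin n) (Fin n) F) + vecMulVec t (Pi.single i 1)) p r = _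
      simp [Matrix.add_apply, Matrix.one_apply, vecMulVec_apply, Pi.single_apply]
    simp only [hent, add_mul, ite_mul, one_mul, zero_mul, mul_assoc]
    rw [Finset.sum_add_distrib, Finset.sum_ite_eq, ← Finset.mul_sum,
      Finset.sum_ite_eq']
    simp
  have hBinv : ∀ s p, B₂.inv s p
      = (if s = p then 1 else 0) - t s * (if p = i then 1 else 0) := by
    intro s p
    show ((1 : Matrix (Fin n) (Fin n) F) - vecMulVec t (Pi.single i 1)) s p = _
    simp [Matrix.sub_apply, Matrix.one_apply, vecMulVec_apply, Pi.single_apply]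
  rw [Matrix.mul_apply]
  have hterm : ∀ s, (B₂.val * M) p s * B₂.inv s p
      = (if s = p then M p s + t p * M i s else 0)
        - ((M p s + t p * M i s) * t s) * (if p = i then 1 else 0) := by
    intro s
    rw [hBM, hBinv]
    by_cases hp : p = i
    · subst hp
      by_cases hs : s = p <;> simp [hs] <;> ring
    · by_cases hs : s = p <;> simp [hs, hp] <;> try ring
  rw [Finset.sum_congr rfl fun s _ => hterm s, Finset.sum_sub_distrib,
    Finset.sum_ite_eq', ← Finset.sum_mul]
  simp only [Finset.mem_univ, if_true]
  by_cases hp : p = i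
  · subst hp
    have hti0 : t p = 0 := by simp [ht]
    rw [if_pos rfl, mul_one, hti0]
    have hsum : ∑ s, (M p s + 0 * M p s) * t s = M p p - γ p := by
      simp only [zero_mul, add_zero]
      have h1 : ∀ s, M p s * t s = t s := by
        intro s
        by_cases hs : s = p
        · subst hs; simp [ht]
        · rw [hrow s hs, one_mul]
      rw [Finset.sum_congr rfl fun s _ => h1 s]
      have h2 : ∀ s, t s = (γ s - M s s) - (if s = p then γ p - M p p else 0) := by
        intro s
        by_cases hs : s = p
        · subst hs; simp [ht]
        · simp [ht, hs]
      rw [Finset.sum_congr rfl fun s _ => h2 s, Finset.sum_sub_distrib,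
        Finset.sum_ite_eq']
      have h3 : ∑ s, (γ s - M s s) = 0 := by
        rw [Finset.sum_sub_distrib, hγ, ← htr, Matrix.trace]
        simp [Matrix.diag]
      rw [h3]
      simp
    rw [hsum]
    ring
  · rw [if_neg hp, mul_zero, sub_zero, hrow p (by exact fun h => hp h)]
    simp only [ht, if_neg hp]
    ring
end

section
/- Let A be an n×n integer matrix whose first row is (a₁₁, a₁₂, 0, ..., 0, a₁k, a₁,k+1, ..., a₁ₙ) with a₁₂ ≠ 0 and a₁k ≠ 0 for some k ≥ 3. Let m = gcd(a₁₂, a₁k), p = a₁₂/m, q = a₁k/m, and let r, s be integers with p·s − q·r = 1. Let B be the identity matrix modified so that b₂₂ = p, b₂k = q, b_k2 = r, b_kk = s. Then B ∈ GLₙ(ℤ) and the first row of B·A·B⁻¹ is (a₁₁, m, 0, ..., 0, a₁,k+1, ..., a₁ₙ). -/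
lemma sum_two' {ι : Type*} [Fintype ι] [DecidableEq ι] (f : ι → ℤ) (a b : ι)
    (hab : a ≠ b) (h : ∀ l, l ≠ a → l ≠ b → f l = 0) :
    ∑ l, f l = f a + f b := by
  rw [← Finset.sum_pair hab]
  exact (Finset.sum_subset (Finset.subset_univ _) (by
    intro x _ hx
    simp only [Finset.mem_insert, Finset.mem_singleton, not_or] at hx
    exact h x hx.1 hx.2)).symm

theorem stmt_10 {n : ℕ}
    (A : Matrix (Fin (n + 3)) (Fin (n + 3)) ℤ)
    (k : Fin (n + 3)) (hk : 1 < k)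
    (h12 : A 0 1 ≠ 0) (h1k : A 0 k ≠ 0)
    (hzero : ∀ j, 1 < j → j < k → A 0 j = 0)
    (m p q r s : ℤ)
    (hm : m = Int.gcd (A 0 1) (A 0 k))
    (hp : p = A 0 1 / m) (hq : q = A 0 k / m)
    (hbez : p * s - q * r = 1)
    (B : Matrix (Fin (n + 3)) (Fin (n + 3)) ℤ)
    (hB : B = Matrix.of fun i j =>
      if i = 1 ∧ j = 1 then p
      else if i = 1 ∧ j = k then q
      else if i = k ∧ j = 1 then r
      else if i = k ∧ j = k then s
      else (1 : Matrix (Fin (n + 3)) (Fin (n + 3)) ℤ) i j) :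
    IsUnit B ∧
    (B * A * B⁻¹) 0 0 = A 0 0 ∧
    (B * A * B⁻¹) 0 1 = m ∧
    (∀ j, 1 < j → j ≤ k → (B * A * B⁻¹) 0 j = 0) ∧
    (∀ j, k < j → (B * A * B⁻¹) 0 j = A 0 j) := by
  have hk1 : (1 : Fin (n + 3)) ≠ k := hk.ne
  have hk0 : k ≠ 0 := by
    intro h; rw [h] at hk; exact absurd hk (Fin.not_lt_zero 1)
  have h01 : (0 : Fin (n + 3)) ≠ 1 := by
    intro h; exact absurd (congrArg Fin.val h) (by simp)
  have h0k : (0 : Fin (n + 3)) ≠ k := Ne.symm hk0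
  set C : Matrix (Fin (n + 3)) (Fin (n + 3)) ℤ := Matrix.of fun i j =>
    if i = 1 ∧ j = 1 then s
    else if i = 1 ∧ j = k then -q
    else if i = k ∧ j = 1 then -r
    else if i = k ∧ j = k then p
    else (1 : Matrix (Fin (n + 3)) (Fin (n + 3)) ℤ) i j with hC
  have hBC : B * C = 1 := by
    ext i j
    rw [Matrix.mul_apply]
    by_cases hi1 : i = 1
    · subst hi1
      have hside : ∀ l, l ≠ 1 → l ≠ k → B 1 l * C l j = 0 := by
        intro l h1 h2
        have : B 1 l = 0 := by
          simp [hB, Matrix.one_apply, h1, h2, Ne.symm h1, hk1]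
        rw [this, zero_mul]
      rw [sum_two' _ 1 k hk1 hside]
      have hB11 : B 1 1 = p := by simp [hB]
      have hB1k : B 1 k = q := by simp [hB, Ne.symm hk1]
      rw [hB11, hB1k]
      by_cases hj1 : j = 1
      · subst hj1
        have : C 1 1 = s := by simp [hC]
        rw [this]
        have : C k 1 = -r := by simp [hC, Ne.symm hk1]
        rw [this, Matrix.one_apply_eq]
        linear_combination hbez
      · by_cases hjk : j = k
        · subst hjk
          have h1 : C 1 j = -q := by simp [hC, Ne.symm hk1]
          have h2 : C j j = p := by simp [hC, Ne.symm hk1]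
          rw [h1, h2, Matrix.one_apply_ne hk1]
          ring
        · have h1 : C 1 j = 0 := by
            simp [hC, Matrix.one_apply, Ne.symm hj1, hj1, hjk]
          have h2 : C k j = 0 := by
            simp [hC, Matrix.one_apply, Ne.symm hjk, hj1, hjk, Ne.symm hk1]
          rw [h1, h2, Matrix.one_apply_ne (Ne.symm hj1)]
          ring
    · by_cases hik : i = k
      · subst hik
        have hside : ∀ l, l ≠ 1 → l ≠ i → B i l * C l j = 0 := by
          intro l h1 h2
          have : B i l = 0 := by
            simp [hB, Matrix.one_apply, h1, h2, Ne.symm h2, Ne.symm hk1]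
          rw [this, zero_mul]
        rw [sum_two' _ 1 i hk1 hside]
        have hBk1 : B i 1 = r := by simp [hB, Ne.symm hk1]
        have hBkk : B i i = s := by simp [hB, Ne.symm hk1]
        rw [hBk1, hBkk]
        by_cases hj1 : j = 1
        · subst hj1
          have h1 : C 1 1 = s := by simp [hC]
          have h2 : C i 1 = -r := by simp [hC, Ne.symm hk1]
          rw [h1, h2, Matrix.one_apply_ne (Ne.symm hk1)]
          ring
        · by_cases hjk : j = i
          · subst hjk
            have h1 : C 1 j = -q := by simp [hC, Ne.symm hk1]
            have h2 : C j j = p := by simp [hC, Ne.symm hk1]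
            rw [h1, h2, Matrix.one_apply_eq]
            linear_combination hbez
          · have h1 : C 1 j = 0 := by
              simp [hC, Matrix.one_apply, Ne.symm hj1, hj1, hjk]
            have h2 : C i j = 0 := by
              simp [hC, Matrix.one_apply, Ne.symm hjk, hj1, hjk, Ne.symm hk1]
            rw [h1, h2, Matrix.one_apply_ne (Ne.symm hjk)]
            ring
      · rw [Fintype.sum_eq_single i (by
          intro l hl
          have : B i l = 0 := by
            simp [hB, Matrix.one_apply, hi1, hik, Ne.symm hl]
          rw [this, zero_mul])]
        have hBii : B i i = 1 := by simp [hB, hi1, hik]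
        have hCij : C i j = (1 : Matrix (Fin (n + 3)) (Fin (n + 3)) ℤ) i j := by
          simp [hC, hi1, hik]
        rw [hBii, hCij, one_mul]
    
  have hBunit : IsUnit B := by
    have := invertibleOfRightInverse B C hBC
    exact isUnit_of_invertible B
  have hBinv : B⁻¹ = C := Matrix.inv_eq_right_inv hBC
  have hrow : ∀ l, (B * A) 0 l = A 0 l := by
    intro l
    rw [Matrix.mul_apply, Fintype.sum_eq_single 0 (by
      intro x hx
      have : B 0 x = 0 := by
        simp [hB, Matrix.one_apply, h01, h0k, Ne.symm hx]
      rw [this, zero_mul])]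
    have : B 0 0 = 1 := by simp [hB, h01, h0k]
    rw [this, one_mul]
  have key : ∀ j, (B * A * B⁻¹) 0 j = ∑ l, A 0 l * C l j := by
    intro j
    rw [hBinv, Matrix.mul_apply]
    simp only [hrow]
  have hdvd1 : m ∣ A 0 1 := hm ▸ Int.gcd_dvd_left (A 0 1) (A 0 k)
  have hdvdk : m ∣ A 0 k := hm ▸ Int.gcd_dvd_right (A 0 1) (A 0 k)
  have hA1 : m * p = A 0 1 := by rw [hp]; exact Int.mul_ediv_cancel' hdvd1
  have hAk : m * q = A 0 k := by rw [hq]; exact Int.mul_ediv_cancel' hdvdk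
  refine ⟨hBunit, ?_, ?_, ?_, ?_⟩
  · rw [key, Fintype.sum_eq_single 0 (by
      intro x hx
      have : C x 0 = 0 := by
        simp [hC, Matrix.one_apply, h01, h0k, hx, Ne.symm h01, Ne.symm h0k]
      rw [this, mul_zero])]
    have : C 0 0 = 1 := by simp [hC, h01, h0k]
    rw [this, mul_one]
  · rw [key]
    have hside : ∀ l, l ≠ 1 → l ≠ k → A 0 l * C l 1 = 0 := by
      intro l h1 h2
      have : C l 1 = 0 := by
        simp [hC, Matrix.one_apply, h1, h2, Ne.symm h1]
      rw [this, mul_zero]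
    rw [sum_two' _ 1 k hk1 hside]
    have h1 : C 1 1 = s := by simp [hC]
    have h2 : C k 1 = -r := by simp [hC, Ne.symm hk1]
    rw [h1, h2, ← hA1, ← hAk]
    linear_combination m * hbez
  · intro j hj1 hjk
    have hj1' : j ≠ 1 := hj1.ne'
    by_cases hjk' : j = k
    · subst hjk'
      rw [key]
      have hside : ∀ l, l ≠ 1 → l ≠ j → A 0 l * C l j = 0 := by
        intro l h1 h2
        have : C l j = 0 := by
          simp [hC, Matrix.one_apply, h1, h2, Ne.symm h2]
        rw [this, mul_zero]
      rw [sum_two' _ 1 j (Ne.symm hj1') hside]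
      have h1 : C 1 j = -q := by simp [hC, hj1', Ne.symm hj1']
      have h2 : C j j = p := by simp [hC, hj1']
      rw [h1, h2, ← hA1, ← hAk]
      ring
    · have hjlt : j < k := lt_of_le_of_ne hjk hjk'
      rw [key, Fintype.sum_eq_single j (by
        intro x hx
        have : C x j = 0 := by
          simp [hC, Matrix.one_apply, hj1', hjk', hx, Ne.symm hx]
        rw [this, mul_zero])]
      have : C j j = 1 := by simp [hC, hj1', hjk']
      rw [this, mul_one]
      exact hzero j hj1 hjlt
  · intro j hj
    have hjk' : j ≠ k := hj.ne'
    have hj1' : j ≠ 1 := (hk.trans hj).ne'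
    rw [key, Fintype.sum_eq_single j (by
      intro x hx
      have : C x j = 0 := by
        simp [hC, Matrix.one_apply, hj1', hjk', hx, Ne.symm hx]
      rw [this, mul_zero])]
    have : C j j = 1 := by simp [hC, hj1', hjk']
    rw [this, mul_one]
end

section
/- Let A be a nonscalar n×n matrix over a field F and γ ∈ F. Then A is similar to a matrix whose (1,1) entry is γ. -/
-- existence of a vector x with x, A x linearly independent
theorem aux_exists {F : Type*} [Field F] {n : ℕ}
    (A : Matrix (Fin (n + 2)) (Fin (n + 2)) F)
    (hA : ∀ c : F, A ≠ c • (1 : Matrix (Fin (n + 2)) (Fin (n + 2)) F)) :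
    ∃ x : Fin (n + 2) → F, LinearIndependent F ![x, A.mulVec x] := by
  by_contra h
  push_neg at h
  -- every x with x ≠ 0 has A x ∈ span x
  have key : ∀ x : Fin (n+2) → F, ∃ c : F, A.mulVec x = c • x := by
    intro x
    by_cases hx : x = 0
    · exact ⟨0, by simp [hx]⟩
    · have := (LinearIndependent.pair_iff' hx).not.mp (h x)
      push_neg at this
      obtain ⟨a, ha⟩ := this
      exact ⟨a, ha.symm⟩
  -- pick nonzero x0
  have hx0 : (Pi.single 0 1 : Fin (n+2) → F) ≠ 0 := by
    intro hc
    have := congrFun hc 0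
    simp at this
  obtain ⟨c0, hc0⟩ := key (Pi.single 0 1)
  apply hA c0
  ext i j
  -- show A.mulVec v = c0 • v for all v, specialize to basis vectors
  have main : ∀ v : Fin (n+2) → F, A.mulVec v = c0 • v := by
    intro v
    by_cases hv : v = 0
    · simp [hv]
    obtain ⟨c, hc⟩ := key v
    by_cases hdep : ∃ t : F, v = t • (Pi.single 0 1 : Fin (n+2) → F)
    · obtain ⟨t, rfl⟩ := hdep
      rw [Matrix.mulVec_smul, hc0, smul_comm]
    · obtain ⟨c', hc'⟩ := key ((Pi.single 0 1 : Fin (n+2) → F) + v)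
      rw [Matrix.mulVec_add, hc0, hc, smul_add] at hc'
      have hrel : (c0 - c') • (Pi.single 0 1 : Fin (n+2) → F) + (c - c') • v = 0 := by
        rw [sub_smul, sub_smul]
        linear_combination (norm := module) hc'
      by_cases hcc : c0 = c'
      · rw [hcc, sub_self, zero_smul, zero_add] at hrel
        have : c - c' = 0 := by
          by_contra hne
          exact hv (by simpa [hne] using congrArg (fun w => (c - c')⁻¹ • w) hrel)
        have hcc2 : c = c0 := by rw [hcc]; exact sub_eq_zero.mp this
        rw [hc, hcc2]
      · exfalso
        apply hdep
        have := congrArg (fun w => (c0 - c')⁻¹ • w) hrel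
        simp only [smul_add, smul_smul, smul_zero] at this
        rw [inv_mul_cancel₀ (sub_ne_zero.mpr hcc), one_smul] at this
        have hsingle : (Pi.single 0 1 : Fin (n+2) → F) = -((c0 - c')⁻¹ * (c - c')) • v := by
          rw [neg_smul]
          linear_combination (norm := module) this
        set s : F := -((c0 - c')⁻¹ * (c - c')) with hs
        have hsne : s ≠ 0 := by
          intro h0
          rw [h0, zero_smul] at hsingle
          exact hx0 hsingle
        refine ⟨s⁻¹, ?_⟩
        rw [hsingle, smul_smul, inv_mul_cancel₀ hsne, one_smul]
  have := congrFun (main (Pi.single j 1)) i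
  simpa [Matrix.mulVec_single, Matrix.smul_apply, Matrix.one_apply, Pi.single_apply, mul_comm] using this

theorem aux_exists' {F : Type*} [Field F] {n : ℕ}
    (A : Matrix (Fin (n + 2)) (Fin (n + 2)) F)
    (x : Fin (n + 2) → F) (hx : LinearIndependent F ![x, A.mulVec x]) (γ : F) :
    ∃ P : (Matrix (Fin (n + 2)) (Fin (n + 2)) F)ˣ,
      (P.val * A * P⁻¹.val) 0 0 = γ := by
  classical
  set y : Fin (n+2) → F := A.mulVec x - γ • x with hy
  have li2 : LinearIndependent F ![x, y] := by
    rw [LinearIndependent.pair_iff]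
    intro s t hst
    have h2 : (s - t * γ) • x + t • A.mulVec x = 0 := by
      rw [sub_smul, mul_smul]
      linear_combination (norm := module) hst
    obtain ⟨h3, h4⟩ := (LinearIndependent.pair_iff.mp hx) _ _ h2
    constructor
    · rw [h4, mul_comm, mul_zero] at h3; simpa using h3
    · exact h4
  have hxy : x ≠ y := by
    have := li2.injective (R := F)
    intro hc
    have : (0 : Fin 2) = 1 := this (by simp [hc])
    simp at this
  -- extend to a basis
  have hsub : LinearIndepOn F id (Set.range ![x, y]) :=
    li2.linearIndepOn_id
  set t := hsub.extend (Set.subset_univ _) with ht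
  let b' : Module.Basis t F (Fin (n+2) → F) := Module.Basis.extend hsub
  have hxt : x ∈ t := hsub.subset_extend _ ⟨0, rfl⟩
  have hyt : y ∈ t := hsub.subset_extend _ ⟨1, rfl⟩
  haveI : Fintype t := FiniteDimensional.fintypeBasisIndex b'
  have hcard : Fintype.card (Fin (n+2)) = Fintype.card t := by
    rw [Fintype.card_fin, ← Module.finrank_eq_card_basis b', Module.finrank_fin_fun]
  let e0 : Fin (n+2) ≃ t := Fintype.equivOfCardEq hcard
  set a : Fin (n+2) := e0.symm ⟨x, hxt⟩ with ha
  set bb : Fin (n+2) := e0.symm ⟨y, hyt⟩ with hbb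
  have hab : a ≠ bb := by
    simp only [ha, hbb, ne_eq, EmbeddingLike.apply_eq_iff_eq, Subtype.mk.injEq]
    exact hxy
  set τ : Equiv.Perm (Fin (n+2)) := Equiv.swap 0 a with hτ
  set b1 : Fin (n+2) := τ.symm bb with hb1
  have hb1ne : b1 ≠ 0 := by
    intro hc
    apply hab
    have : τ 0 = bb := by rw [← hc]; simp [hb1]
    rw [hτ, Equiv.swap_apply_left] at this
    exact this
  set π : Equiv.Perm (Fin (n+2)) := (Equiv.swap 1 b1).trans τ with hπ
  have hπ0 : π 0 = a := by
    rw [hπ]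
    simp only [Equiv.trans_apply]
    rw [Equiv.swap_apply_of_ne_of_ne (Fin.zero_ne_one) (Ne.symm hb1ne), hτ, Equiv.swap_apply_left]
  have hπ1 : π 1 = bb := by
    rw [hπ]
    simp only [Equiv.trans_apply]
    rw [Equiv.swap_apply_left, hb1, Equiv.apply_symm_apply]
  let e : Fin (n+2) ≃ t := π.trans e0
  let b : Module.Basis (Fin (n+2)) F (Fin (n+2) → F) := b'.reindex e.symm
  have hb0 : b 0 = x := by
    show (b'.reindex e.symm) 0 = x
    rw [Module.Basis.reindex_apply, Equiv.symm_symm]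
    have he : e 0 = ⟨x, hxt⟩ := by
      show e0 (π 0) = ⟨x, hxt⟩
      rw [hπ0, ha, Equiv.apply_symm_apply]
    rw [he]
    exact Module.Basis.extend_apply_self hsub _
  have hb1' : b 1 = y := by
    show (b'.reindex e.symm) 1 = y
    rw [Module.Basis.reindex_apply, Equiv.symm_symm]
    have he : e 1 = ⟨y, hyt⟩ := by
      show e0 (π 1) = ⟨y, hyt⟩
      rw [hπ1, hbb, Equiv.apply_symm_apply]
    rw [he]
    exact Module.Basis.extend_apply_self hsub _
  -- change of basis
  let eb : Module.Basis (Fin (n+2)) F (Fin (n+2) → F) := Pi.basisFun F (Fin (n+2))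
  have hPQ : b.toMatrix eb * eb.toMatrix b = 1 := Module.Basis.toMatrix_mul_toMatrix_flip _ _
  have hQP : eb.toMatrix b * b.toMatrix eb = 1 := Module.Basis.toMatrix_mul_toMatrix_flip _ _
  refine ⟨⟨b.toMatrix eb, eb.toMatrix b, hPQ, hQP⟩, ?_⟩
  have hinv : ((⟨b.toMatrix eb, eb.toMatrix b, hPQ, hQP⟩ :
      (Matrix (Fin (n+2)) (Fin (n+2)) F)ˣ))⁻¹.val = eb.toMatrix b := rfl
  rw [hinv]
  show (b.toMatrix eb * A * eb.toMatrix b) 0 0 = γ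
  have hA' : A = LinearMap.toMatrix eb eb (Matrix.toLin eb eb A) := by
    rw [LinearMap.toMatrix_toLin]
  rw [hA', basis_toMatrix_mul_linearMap_toMatrix_mul_basis_toMatrix]
  rw [LinearMap.toMatrix_apply]
  rw [hb0]
  have : Matrix.toLin eb eb A x = A.mulVec x := by
    rw [Matrix.toLin_eq_toLin', Matrix.toLin'_apply]
  rw [this]
  have hAx : A.mulVec x = γ • b 0 + b 1 := by
    rw [hb0, hb1', hy]; module
  rw [hAx, map_add, map_smul, b.repr_self, b.repr_self]
  simp

theorem stmt_15 {F : Type*} [Field F] {n : ℕ}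
    (A : Matrix (Fin (n + 2)) (Fin (n + 2)) F)
    (hA : ∀ c : F, A ≠ c • (1 : Matrix (Fin (n + 2)) (Fin (n + 2)) F)) (γ : F) :
    ∃ P : (Matrix (Fin (n + 2)) (Fin (n + 2)) F)ˣ,
      (P.val * A * P⁻¹.val) 0 0 = γ := by
  obtain ⟨x, hx⟩ := aux_exists A hA
  exact aux_exists' A x hx γ
end

section
/- Let A be a nondiagonal n×n integer matrix. Then A is similar over ℤ to an integer matrix that has, in some row r, all off-diagonal entries equal to 1, provided A has an off-diagonal entry equal to 1. -/
theorem stmt_16 {n : ℕ}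
    (A : Matrix (Fin n) (Fin n) ℤ)
    (r s : Fin n) (hrs : r ≠ s) (hArs : A r s = 1) :
    ∃ P : (Matrix (Fin n) (Fin n) ℤ)ˣ, ∃ r' : Fin n,
      ∀ k, k ≠ r' → (P.val * A * P⁻¹.val) r' k = 1 := by
  classical
  set v : Fin n → ℤ := fun k => if k = r ∨ k = s then 0 else A r k - 1 with hv
  set E : Matrix (Fin n) (Fin n) ℤ :=
    Matrix.of (fun i k => if i = s then v k else 0) with hE
  have hvs : v s = 0 := by simp [hv]
  have hEE : E * E = 0 := by
    ext i k
    rw [Matrix.mul_apply]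
    have : ∀ j, E i j * E j k = 0 := by
      intro j
      by_cases h1 : i = s <;> by_cases h2 : j = s <;>
        simp [hE, h1, h2, hvs]
    simp [this]
  have h1 : (1 + E) * (1 - E) = 1 := by
    have : (1 + E) * (1 - E) = 1 - E * E := by noncomm_ring
    rw [this, hEE, sub_zero]
  have h2 : (1 - E) * (1 + E) = 1 := by
    have : (1 - E) * (1 + E) = 1 - E * E := by noncomm_ring
    rw [this, hEE, sub_zero]
  refine ⟨⟨1 + E, 1 - E, h1, h2⟩, r, fun k hk => ?_⟩
  have hinv : ((⟨1 + E, 1 - E, h1, h2⟩ : (Matrix (Fin n) (Fin n) ℤ)ˣ)⁻¹).val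
      = 1 - E := rfl
  rw [hinv]
  have hrow : ∀ j, ((1 + E) * A) r j = A r j := by
    intro j
    rw [Matrix.add_mul, Matrix.one_mul]
    have : (E * A) r j = 0 := by
      rw [Matrix.mul_apply]
      have : ∀ m, E r m * A m j = 0 := by
        intro m; simp [hE, hrs]
      simp [this]
    simp [Matrix.add_apply, this]
  rw [Matrix.mul_apply]
  have hterm : ∀ j, ((1 + E) * A) r j * (1 - E) j k
      = A r j * ((if j = k then (1:ℤ) else 0) - (if j = s then v k else 0)) := by
    intro j
    rw [hrow]
    simp [Matrix.sub_apply, Matrix.one_apply, hE]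
  rw [Finset.sum_congr rfl fun j _ => hterm j]
  have hsplit : ∀ j : Fin n,
      A r j * ((if j = k then (1:ℤ) else 0) - (if j = s then v k else 0))
      = (if j = k then A r j else 0) - (if j = s then A r j * v k else 0) := by
    intro j
    split_ifs <;> ring
  rw [Finset.sum_congr rfl fun j _ => hsplit j, Finset.sum_sub_distrib]
  simp only [Finset.sum_ite_eq', Finset.mem_univ, if_true]
  rw [hArs, one_mul]
  by_cases hks : k = s
  · simp [hks, hvs, hArs]
  · simp [hv, hk, hks]
end

section
/- Let A be an n×n integer matrix such that all off-diagonal entries of some row r equal 1, and let γ₁, ..., γₙ ∈ ℤ with γ₁ + ⋯ + γₙ = tr(A). Then A is similar over ℤ to an integer matrix with diagonal (γ₁, ..., γₙ). -/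
theorem stmt_17 {n : ℕ} (hn : 2 ≤ n)
    (A : Matrix (Fin n) (Fin n) ℤ) (r : Fin n)
    (hrow : ∀ k, k ≠ r → A r k = 1)
    (γ : Fin n → ℤ) (hγ : ∑ i, γ i = A.trace) :
    ∃ P : (Matrix (Fin n) (Fin n) ℤ)ˣ, ∀ i, (P.val * A * P⁻¹.val) i i = γ i := by
  set d : Fin n → ℤ := fun i => if i = r then 0 else γ i - A i i with hd
  set C : Matrix (Fin n) (Fin n) ℤ :=
    Matrix.of fun i j => d i * (if j = r then 1 else 0) with hC
  have hdr : d r = 0 := by simp [hd]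
  have hC2 : C * C = 0 := by
    ext i j
    simp only [Matrix.mul_apply, hC, Matrix.of_apply, Matrix.zero_apply]
    rw [Finset.sum_eq_single r]
    · simp [hdr]
    · intro b _ hb; simp [hb]
    · simp
  have hval : (1 + C) * (1 - C) = 1 := by
    have h : (1 + C) * (1 - C) = 1 - C * C := by noncomm_ring
    rw [h, hC2, sub_zero]
  have hinv : (1 - C) * (1 + C) = 1 := by
    have h : (1 - C) * (1 + C) = 1 - C * C := by noncomm_ring
    rw [h, hC2, sub_zero]
  refine ⟨⟨1 + C, 1 - C, hval, hinv⟩, ?_⟩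
  have hPinv : (⟨1 + C, 1 - C, hval, hinv⟩ : (Matrix (Fin n) (Fin n) ℤ)ˣ)⁻¹.val
      = 1 - C := rfl
  intro i
  rw [hPinv]
  have hCA : ∀ i j, (C * A) i j = d i * A r j := by
    intro i j
    simp only [Matrix.mul_apply, hC, Matrix.of_apply]
    rw [Finset.sum_eq_single r]
    · simp
    · intro b _ hb; simp [hb]
    · simp
  have hAC : ∀ i j, (A * C) i j = (∑ k, A i k * d k) * (if j = r then 1 else 0) := by
    intro i j
    simp only [Matrix.mul_apply, hC, Matrix.of_apply, Finset.sum_mul]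
    ring_nf
    exact Finset.sum_congr rfl fun x _ => by ring
  have expand : (1 + C) * A * (1 - C) = A + C * A - (A * C + C * (A * C)) := by
    noncomm_ring
  rw [expand]
  simp only [Matrix.sub_apply, Matrix.add_apply]
  have hCAC : (C * (A * C)) i i = 0 := by
    simp only [Matrix.mul_apply, hC, Matrix.of_apply]
    apply Finset.sum_eq_zero
    intro k _
    by_cases hik : i = r
    · simp [hik, hdr]
    · simp [hik]
  rw [hCAC, hCA, hAC]
  by_cases hi : i = r
  · have hsum : ∑ k, A r k * d k = A r r - γ r := by
      have h1 : ∀ k, A r k * d k = if k = r then 0 else γ k - A k k := by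
        intro k
        by_cases hk : k = r
        · simp [hk, hdr]
        · simp [hd, hk, hrow k hk]
      calc ∑ k, A r k * d k
          = ∑ k, ((γ k - A k k) - if k = r then γ k - A k k else 0) := by
            refine Finset.sum_congr rfl fun k _ => ?_
            rw [h1]; split <;> simp
        _ = (∑ k, (γ k - A k k)) - ∑ k, (if k = r then γ k - A k k else 0) :=
            Finset.sum_sub_distrib _ _
        _ = (∑ k, (γ k - A k k)) - (γ r - A r r) := by
            rw [Finset.sum_ite_eq' Finset.univ r (fun k => γ k - A k k)]; simp
        _ = A r r - γ r := by
            rw [Finset.sum_sub_distrib, hγ, Matrix.trace]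
            simp [Matrix.diag]
    rw [hi, hsum, hdr]
    simp
  · have hAri : A r i = 1 := hrow i hi
    simp [hd, hi, hAri]
end
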